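/- Let σ ∈ S_d be a permutation that is a product of exactly r pairwise disjoint nontrivial cycles (and possibly fixed points), with r ≥ 1. Then there exists a permutation τ ∈ S_d that is a product of r − 1 disjoint transpositions such that στ is a single d-cycle. -/

import Mathlib

open Equiv Equiv.Perm Finset

variable {α : Type*} [Fintype α] [DecidableEq α]

lemma chain_half {h q : Equiv.Perm α} {a b : α} (hqc : q.IsCycle) (hb : b ∈ q.support)
    (hq1 : h a = q b) (hq2 : ∀ x ∈ q.support, x ≠ b → h x = q x) :
    ∀ y ∈ q.support, h.SameCycle a y := by
  have key : ∀ n : ℕ, h.SameCycle a ((q ^ (n + 1)) b) := by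
    intro n
    induction n with
    | zero => exact ⟨1, by simp [hq1]⟩
    | succ n ih =>
      by_cases hyb : (q ^ (n + 1)) b = b
      · rw [pow_succ', Equiv.Perm.mul_apply, hyb]
        exact ⟨1, by simp [hq1]⟩
      · have hy : (q ^ (n + 1)) b ∈ q.support := Equiv.Perm.pow_apply_mem_support.2 hb
        refine ih.trans ⟨1, ?_⟩
        rw [zpow_one, hq2 _ hy hyb]; rw [pow_succ' q (n+1), Equiv.Perm.mul_apply]
  have hab : h.SameCycle a b := by
    have h1 : q ≠ 1 := by
      intro h1; rw [h1] at hb; simp at hb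
    have h2 : 0 < orderOf q := orderOf_pos q
    have := key (orderOf q - 1)
    rwa [Nat.sub_add_cancel h2, pow_orderOf_eq_one, Equiv.Perm.one_apply] at this
  intro y hy
  obtain ⟨n, hn⟩ := hqc.exists_pow_eq (Equiv.Perm.mem_support.1 hb)
    (Equiv.Perm.mem_support.1 hy)
  cases n with
  | zero => rw [pow_zero, Equiv.Perm.one_apply] at hn; exact hn ▸ hab
  | succ m => exact hn ▸ key m

lemma merge_cycle {p q : Equiv.Perm α} (hp : p.IsCycle) (hq : q.IsCycle) (hd : p.Disjoint q)
    {a b : α} (ha : a ∈ p.support) (hb : b ∈ q.support) :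
    (p * q * Equiv.swap a b).IsCycle ∧
      (p * q * Equiv.swap a b).support = p.support ∪ q.support := by
  set h := p * q * Equiv.swap a b with hh
  have hds : _root_.Disjoint p.support q.support := hd.disjoint_support
  have hanq : a ∉ q.support := Finset.disjoint_left.1 hds ha
  have hbnp : b ∉ p.support := (Finset.disjoint_right.1 hds) hb
  have hab : a ≠ b := fun e => hanq (e ▸ hb)
  have hcomp : ∀ x, x ≠ a → x ≠ b → h x = p (q x) := by
    intro x hxa hxb
    simp [hh, Equiv.Perm.mul_apply, Equiv.swap_apply_of_ne_of_ne hxa hxb]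
  have hha : h a = q b := by
    have : q b ∉ p.support := Finset.disjoint_right.1 hds (Equiv.Perm.apply_mem_support.2 hb)
    simp [hh, Equiv.Perm.mul_apply, Equiv.swap_apply_left,
      Equiv.Perm.notMem_support.1 this]
  have hhb : h b = p a := by
    simp [hh, Equiv.Perm.mul_apply, Equiv.swap_apply_right, Equiv.Perm.notMem_support.1 hanq]
  have hq2 : ∀ x ∈ q.support, x ≠ b → h x = q x := by
    intro x hx hxb
    have hxa : x ≠ a := fun e => hanq (e ▸ hx)
    have : q x ∉ p.support := Finset.disjoint_right.1 hds (Equiv.Perm.apply_mem_support.2 hx)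
    rw [hcomp x hxa hxb, Equiv.Perm.notMem_support.1 this]
  have hp2 : ∀ x ∈ p.support, x ≠ a → h x = p x := by
    intro x hx hxa
    have hxb : x ≠ b := fun e => hbnp (e ▸ hx)
    have : x ∉ q.support := Finset.disjoint_left.1 hds hx
    rw [hcomp x hxa hxb, Equiv.Perm.notMem_support.1 this]
  have c1 : ∀ y ∈ q.support, h.SameCycle a y := chain_half hq hb hha hq2
  have c2 : ∀ y ∈ p.support, h.SameCycle b y := chain_half hp ha hhb hp2
  have hsupp : h.support = p.support ∪ q.support := by
    ext x
    rcases eq_or_ne x a with rfl | hxa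
    · simp only [Equiv.Perm.mem_support, hha, Finset.mem_union]
      constructor
      · intro _; exact Or.inl (Equiv.Perm.mem_support.1 ha) |>.imp id id
      · intro _; exact fun e => hanq (e ▸ Equiv.Perm.apply_mem_support.2 hb)
    · rcases eq_or_ne x b with rfl | hxb
      · simp only [Equiv.Perm.mem_support, hhb, Finset.mem_union]
        constructor
        · intro _; exact Or.inr (Equiv.Perm.mem_support.1 hb) |>.imp id id
        · intro _; exact fun e => hbnp (e ▸ Equiv.Perm.apply_mem_support.2 ha)
      · rw [Equiv.Perm.mem_support, hcomp x hxa hxb, Finset.mem_union]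
        by_cases hxq : x ∈ q.support
        · have : q x ∉ p.support := Finset.disjoint_right.1 hds (Equiv.Perm.apply_mem_support.2 hxq)
          rw [Equiv.Perm.notMem_support.1 this]
          simp [Equiv.Perm.mem_support.1 hxq, hxq]
        · rw [Equiv.Perm.notMem_support.1 hxq]
          by_cases hxp : x ∈ p.support
          · simp [Equiv.Perm.mem_support.1 hxp, hxp]
          · simp [Equiv.Perm.notMem_support.1 hxp, hxp, hxq]
  refine ⟨⟨a, ?_, ?_⟩, hsupp⟩
  · rw [hha]; exact fun e => hanq (e ▸ Equiv.Perm.apply_mem_support.2 hb)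
  · intro y hy
    have : y ∈ p.support ∪ q.support := hsupp ▸ Equiv.Perm.mem_support.2 hy
    rcases Finset.mem_union.1 this with hyp | hyq
    · exact (c1 b hb).trans (c2 y hyp)
    · exact c1 y hyq

lemma factors_mul_swap {σ : Equiv.Perm α} {a b : α} (ha : a ∈ σ.support) (hb : b ∈ σ.support)
    (hab : ¬ σ.SameCycle a b) :
    (σ * Equiv.swap a b).cycleFactorsFinset =
      insert (σ.cycleOf a * σ.cycleOf b * Equiv.swap a b)
        (((σ.cycleFactorsFinset).erase (σ.cycleOf a)).erase (σ.cycleOf b)) ∧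
    (σ * Equiv.swap a b).support = σ.support ∧
    (σ.cycleOf a * σ.cycleOf b * Equiv.swap a b).support
      = (σ.cycleOf a).support ∪ (σ.cycleOf b).support ∧
    (σ.cycleOf a * σ.cycleOf b * Equiv.swap a b) ∉ σ.cycleFactorsFinset := by
  set p := σ.cycleOf a with hp
  set q := σ.cycleOf b with hq
  set m := p * q * Equiv.swap a b with hm
  set σ' := σ * Equiv.swap a b with hσ'
  have hpa : a ∈ p.support := Equiv.Perm.mem_support_cycleOf_iff.2 ⟨Equiv.Perm.SameCycle.refl _ _, ha⟩
  have hqb : b ∈ q.support := Equiv.Perm.mem_support_cycleOf_iff.2 ⟨Equiv.Perm.SameCycle.refl _ _, hb⟩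
  have hnab : a ≠ b := fun e => hab (e ▸ Equiv.Perm.SameCycle.refl _ _)
  have hds : _root_.Disjoint p.support q.support := by
    rw [Finset.disjoint_left]
    intro x hxp hxq
    exact hab (((Equiv.Perm.mem_support_cycleOf_iff.1 hxp).1).trans
      ((Equiv.Perm.mem_support_cycleOf_iff.1 hxq).1.symm))
  have hd : p.Disjoint q := Equiv.Perm.disjoint_iff_disjoint_support.2 hds
  have hpc : p.IsCycle := Equiv.Perm.isCycle_cycleOf σ (Equiv.Perm.mem_support.1 ha)
  have hqc : q.IsCycle := Equiv.Perm.isCycle_cycleOf σ (Equiv.Perm.mem_support.1 hb)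
  obtain ⟨hmc, hms⟩ := merge_cycle hpc hqc hd hpa hqb
  -- (p*q) agrees with σ on p.support ∪ q.support
  have hpq : ∀ z ∈ p.support ∪ q.support, (p * q) z = σ z := by
    intro z hz
    rcases Finset.mem_union.1 hz with hzp | hzq
    · have hzq' : z ∉ q.support := Finset.disjoint_left.1 hds hzp
      rw [Equiv.Perm.mul_apply, Equiv.Perm.notMem_support.1 hzq']
      exact Equiv.Perm.SameCycle.cycleOf_apply (Equiv.Perm.mem_support_cycleOf_iff.1 hzp).1
    · have h1 : q z = σ z :=
        Equiv.Perm.SameCycle.cycleOf_apply (Equiv.Perm.mem_support_cycleOf_iff.1 hzq).1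
      have h2 : q z ∈ q.support := Equiv.Perm.apply_mem_support.2 hzq
      have h3 : q z ∉ p.support := Finset.disjoint_right.1 hds h2
      rw [Equiv.Perm.mul_apply, Equiv.Perm.notMem_support.1 h3, h1]
  have hmmem : m ∈ σ'.cycleFactorsFinset := by
    rw [Equiv.Perm.mem_cycleFactorsFinset_iff]
    refine ⟨hmc, fun x hx => ?_⟩
    have hz : Equiv.swap a b x ∈ p.support ∪ q.support := by
      rcases eq_or_ne x a with rfl | hxa
      · rw [Equiv.swap_apply_left]; exact Finset.mem_union_right _ hqb
      rcases eq_or_ne x b with rfl | hxb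
      · rw [Equiv.swap_apply_right]; exact Finset.mem_union_left _ hpa
      · rw [Equiv.swap_apply_of_ne_of_ne hxa hxb]; exact hms ▸ hx
    rw [hm, hσ', Equiv.Perm.mul_apply, Equiv.Perm.mul_apply]
    exact hpq _ hz
  have hold : ∀ f ∈ σ.cycleFactorsFinset, f ≠ p → f ≠ q → f ∈ σ'.cycleFactorsFinset := by
    intro f hf hfp hfq
    rw [Equiv.Perm.mem_cycleFactorsFinset_iff] at hf ⊢
    refine ⟨hf.1, fun x hx => ?_⟩
    have hxa : x ≠ a := by
      rintro rfl
      exact hfp (Equiv.Perm.cycle_is_cycleOf hx (Equiv.Perm.mem_cycleFactorsFinset_iff.2 hf))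
    have hxb : x ≠ b := by
      rintro rfl
      exact hfq (Equiv.Perm.cycle_is_cycleOf hx (Equiv.Perm.mem_cycleFactorsFinset_iff.2 hf))
    rw [hσ', Equiv.Perm.mul_apply, Equiv.swap_apply_of_ne_of_ne hxa hxb]
    exact hf.2 x hx
  have hsab : σ a ≠ b := fun e => hab ⟨1, by simpa using e⟩
  have hsba : σ b ≠ a := fun e => hab (Equiv.Perm.SameCycle.symm ⟨1, by simpa using e⟩)
  have hsupp' : σ'.support = σ.support := by
    ext x
    rcases eq_or_ne x a with rfl | hxa
    · have : σ' x = σ b := by rw [hσ', Equiv.Perm.mul_apply, Equiv.swap_apply_left]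
      simp only [Equiv.Perm.mem_support, this]
      constructor
      · intro _; exact Equiv.Perm.mem_support.1 ha
      · intro _; exact fun e => hsba e
    rcases eq_or_ne x b with rfl | hxb
    · have : σ' x = σ a := by rw [hσ', Equiv.Perm.mul_apply, Equiv.swap_apply_right]
      simp only [Equiv.Perm.mem_support, this]
      constructor
      · intro _; exact Equiv.Perm.mem_support.1 hb
      · intro _; exact fun e => hsab e
    · simp only [Equiv.Perm.mem_support, hσ', Equiv.Perm.mul_apply,
        Equiv.swap_apply_of_ne_of_ne hxa hxb]
  have hmnot : m ∉ σ.cycleFactorsFinset := by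
    intro hmem
    have : m = p := (Equiv.Perm.cycle_is_cycleOf (hms ▸ Finset.mem_union_left _ hpa) hmem).symm ▸ rfl
    have hbm : b ∈ m.support := hms ▸ Finset.mem_union_right _ hqb
    rw [Equiv.Perm.cycle_is_cycleOf (hms ▸ Finset.mem_union_left _ hpa) hmem] at hbm
    exact Finset.disjoint_left.1 hds hbm hqb
  refine ⟨?_, hsupp', hms, hmnot⟩
  apply Finset.Subset.antisymm
  · intro g hg
    have hgc := (Equiv.Perm.mem_cycleFactorsFinset_iff.1 hg).1
    obtain ⟨x, hgx, -⟩ := hgc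
    have hxg : x ∈ g.support := Equiv.Perm.mem_support.2 hgx
    have hxσ' : x ∈ σ'.support := by
      rw [Equiv.Perm.mem_support, ← (Equiv.Perm.mem_cycleFactorsFinset_iff.1 hg).2 x hxg]
      exact hgx
    have hgeq : g = σ'.cycleOf x := Equiv.Perm.cycle_is_cycleOf hxg hg
    by_cases hxm : x ∈ m.support
    · have : m = σ'.cycleOf x := Equiv.Perm.cycle_is_cycleOf hxm hmmem
      rw [hgeq, ← this]
      exact Finset.mem_insert_self _ _
    · have hxσ : x ∈ σ.support := hsupp' ▸ hxσ'
      have hcf : σ.cycleOf x ∈ σ.cycleFactorsFinset :=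
        Equiv.Perm.cycleOf_mem_cycleFactorsFinset_iff.2 hxσ
      have hxcx : x ∈ (σ.cycleOf x).support :=
        Equiv.Perm.mem_support_cycleOf_iff.2 ⟨Equiv.Perm.SameCycle.refl _ _, hxσ⟩
      have hcp : σ.cycleOf x ≠ p := by
        rintro e
        exact hxm (hms ▸ Finset.mem_union_left _ (e ▸ hxcx))
      have hcq : σ.cycleOf x ≠ q := by
        rintro e
        exact hxm (hms ▸ Finset.mem_union_right _ (e ▸ hxcx))
      have : σ.cycleOf x ∈ σ'.cycleFactorsFinset := hold _ hcf hcp hcq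
      have : σ.cycleOf x = σ'.cycleOf x := Equiv.Perm.cycle_is_cycleOf hxcx this
      rw [hgeq, ← this]
      exact Finset.mem_insert_of_mem (Finset.mem_erase.2 ⟨hcq, Finset.mem_erase.2 ⟨hcp, hcf⟩⟩)
  · intro g hg
    rcases Finset.mem_insert.1 hg with rfl | hg'
    · exact hmmem
    · have hgq := (Finset.mem_erase.1 hg').1
      have hgp := (Finset.mem_erase.1 (Finset.mem_erase.1 hg').2).1
      have hgf := (Finset.mem_erase.1 (Finset.mem_erase.1 hg').2).2
      exact hold _ hgf hgp hgq

lemma aux_main : ∀ (r : ℕ) (σ : Equiv.Perm α) (S : Finset α),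
    Multiset.card σ.cycleType = r + 1 →
    (∀ f ∈ σ.cycleFactorsFinset, 2 ≤ (f.support \ S).card) →
    ∃ τ : Equiv.Perm α, τ.cycleType = Multiset.replicate r 2 ∧
      _root_.Disjoint τ.support S ∧ (σ * τ).IsCycle ∧ (σ * τ).support = σ.support := by
  intro r
  induction r with
  | zero =>
    intro σ S hcard _
    refine ⟨1, by simp, by simp, ?_, by rw [mul_one]⟩
    rw [mul_one]
    exact Equiv.Perm.card_cycleType_eq_one.1 hcard
  | succ r ih =>
    intro σ S hcard hinv
    have hfcard : σ.cycleFactorsFinset.card = r + 2 := by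
      rw [Equiv.Perm.cycleType_def, Multiset.card_map] at hcard
      exact hcard
    obtain ⟨f, hf, g, hg, hfg⟩ := Finset.one_lt_card.1 (by omega : 1 < σ.cycleFactorsFinset.card)
    obtain ⟨a, haf⟩ := (Finset.card_pos (s := f.support \ S)).1 (by have := hinv f hf; omega)
    obtain ⟨b, hbg⟩ := (Finset.card_pos (s := g.support \ S)).1 (by have := hinv g hg; omega)
    obtain ⟨haf', haS⟩ := Finset.mem_sdiff.1 haf
    obtain ⟨hbg', hbS⟩ := Finset.mem_sdiff.1 hbg
    have ha : a ∈ σ.support := Equiv.Perm.mem_cycleFactorsFinset_support_le hf haf'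
    have hb : b ∈ σ.support := Equiv.Perm.mem_cycleFactorsFinset_support_le hg hbg'
    have hfa : f = σ.cycleOf a := Equiv.Perm.cycle_is_cycleOf haf' hf
    have hgb : g = σ.cycleOf b := Equiv.Perm.cycle_is_cycleOf hbg' hg
    have hab : ¬ σ.SameCycle a b := fun h => hfg (by rw [hfa, hgb, h.cycleOf_eq])
    have hnab : a ≠ b := fun e => hab (e ▸ Equiv.Perm.SameCycle.refl _ _)
    obtain ⟨hfacts, hsupp', hms, hmnot⟩ := factors_mul_swap ha hb hab
    set p := σ.cycleOf a
    set q := σ.cycleOf b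
    set m := p * q * Equiv.swap a b with hm
    set σ' := σ * Equiv.swap a b with hσ'def
    have hds : _root_.Disjoint p.support q.support := by
      rw [Finset.disjoint_left]
      intro x hxp hxq
      exact hab (((Equiv.Perm.mem_support_cycleOf_iff.1 hxp).1).trans
        ((Equiv.Perm.mem_support_cycleOf_iff.1 hxq).1.symm))
    have hqep : q ∈ σ.cycleFactorsFinset.erase p := by
      rw [← hfa, ← hgb]
      exact Finset.mem_erase.2 ⟨hfg.symm, hg⟩
    have hmni : m ∉ (σ.cycleFactorsFinset.erase p).erase q :=
      fun h => hmnot (Finset.mem_of_mem_erase (Finset.mem_of_mem_erase h))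
    have hcard' : Multiset.card σ'.cycleType = r + 1 := by
      rw [Equiv.Perm.cycleType_def, Multiset.card_map]
      show σ'.cycleFactorsFinset.card = r + 1
      rw [hfacts, Finset.card_insert_of_notMem hmni, Finset.card_erase_of_mem hqep,
        Finset.card_erase_of_mem (hfa ▸ hf), hfcard]
      omega
    set S' : Finset α := insert a (insert b S) with hS'
    have haq : a ∉ q.support := Finset.disjoint_left.1 hds (hfa ▸ haf')
    have hbp : b ∉ p.support := Finset.disjoint_right.1 hds (hgb ▸ hbg')
    have hinv' : ∀ f' ∈ σ'.cycleFactorsFinset, 2 ≤ (f'.support \ S').card := by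
      intro f' hf'
      rw [hfacts] at hf'
      rcases Finset.mem_insert.1 hf' with rfl | hf'old
      · -- merged cycle
        set A := (p.support \ S).erase a with hA
        set B := (q.support \ S).erase b with hB
        have hAcard : 1 ≤ A.card := by
          have h1 : a ∈ p.support \ S := Finset.mem_sdiff.2 ⟨hfa ▸ haf', haS⟩
          have := hinv f hf
          rw [hfa] at this
          rw [hA, Finset.card_erase_of_mem h1]
          omega
        have hBcard : 1 ≤ B.card := by
          have h1 : b ∈ q.support \ S := Finset.mem_sdiff.2 ⟨hgb ▸ hbg', hbS⟩
          have := hinv g hg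
          rw [hgb] at this
          rw [hB, Finset.card_erase_of_mem h1]
          omega
        have hABdisj : _root_.Disjoint A B := by
          apply Finset.disjoint_of_subset_left (Finset.erase_subset _ _)
          apply Finset.disjoint_of_subset_right (Finset.erase_subset _ _)
          exact Finset.disjoint_of_subset_left (Finset.sdiff_subset)
            (Finset.disjoint_of_subset_right (Finset.sdiff_subset) hds)
        have hsub : A ∪ B ⊆ m.support \ S' := by
          intro x hx
          rcases Finset.mem_union.1 hx with hxA | hxB
          · obtain ⟨hxa, hxps⟩ := Finset.mem_erase.1 hxA
            obtain ⟨hxp, hxS⟩ := Finset.mem_sdiff.1 hxps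
            have hxb : x ≠ b := fun e => hbp (e ▸ hxp)
            refine Finset.mem_sdiff.2 ⟨hms ▸ Finset.mem_union_left _ hxp, ?_⟩
            simp [hS', hxa, hxb, hxS]
          · obtain ⟨hxb, hxqs⟩ := Finset.mem_erase.1 hxB
            obtain ⟨hxq, hxS⟩ := Finset.mem_sdiff.1 hxqs
            have hxa : x ≠ a := fun e => haq (e ▸ hxq)
            refine Finset.mem_sdiff.2 ⟨hms ▸ Finset.mem_union_right _ hxq, ?_⟩
            simp [hS', hxa, hxb, hxS]
        calc 2 ≤ A.card + B.card := by omega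
          _ = (A ∪ B).card := (Finset.card_union_of_disjoint hABdisj).symm
          _ ≤ (m.support \ S').card := Finset.card_le_card hsub
      · -- old cycle
        have hf'q : f' ≠ q := (Finset.mem_erase.1 hf'old).1
        have hf'p : f' ≠ p := (Finset.mem_erase.1 (Finset.mem_erase.1 hf'old).2).1
        have hf'σ : f' ∈ σ.cycleFactorsFinset :=
          (Finset.mem_erase.1 (Finset.mem_erase.1 hf'old).2).2
        have hanf : a ∉ f'.support := fun h =>
          hf'p (Equiv.Perm.cycle_is_cycleOf h hf'σ)
        have hbnf : b ∉ f'.support := fun h =>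
          hf'q (Equiv.Perm.cycle_is_cycleOf h hf'σ)
        have : f'.support \ S' = f'.support \ S := by
          ext x
          simp only [Finset.mem_sdiff, hS', Finset.mem_insert]
          constructor
          · rintro ⟨h1, h2⟩; exact ⟨h1, fun h => h2 (Or.inr (Or.inr h))⟩
          · rintro ⟨h1, h2⟩
            refine ⟨h1, ?_⟩
            rintro (rfl | rfl | h)
            · exact hanf h1
            · exact hbnf h1
            · exact h2 h
        rw [this]
        exact hinv f' hf'σ
    obtain ⟨τ', hτ'ct, hτ'S, hτ'c, hτ's⟩ := ih σ' S' hcard' hinv'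
    have haτ' : a ∉ τ'.support := Finset.disjoint_left.1 hτ'S.symm (by simp [hS'])
    have hbτ' : b ∉ τ'.support := Finset.disjoint_left.1 hτ'S.symm (by simp [hS'])
    have hd2 : (Equiv.swap a b).Disjoint τ' := by
      rw [Equiv.Perm.disjoint_iff_disjoint_support, Equiv.Perm.support_swap hnab]
      rw [Finset.disjoint_left]
      rintro x hx
      rcases Finset.mem_insert.1 hx with rfl | hx'
      · exact haτ'
      · rw [Finset.mem_singleton.1 hx']; exact hbτ'
    refine ⟨Equiv.swap a b * τ', ?_, ?_, ?_, ?_⟩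
    · rw [hd2.cycleType_mul, (Equiv.Perm.isCycle_swap hnab).cycleType,
        Equiv.Perm.card_support_swap hnab, hτ'ct, Multiset.replicate_succ]
      rfl
    · rw [hd2.support_mul, Equiv.Perm.support_swap hnab]
      apply Finset.disjoint_union_left.2
      constructor
      · rw [Finset.disjoint_left]
        rintro x hx
        rcases Finset.mem_insert.1 hx with rfl | hx'
        · exact haS
        · rw [Finset.mem_singleton.1 hx']; exact hbS
      · exact Finset.disjoint_of_subset_right
          (Finset.subset_insert _ _ |>.trans (Finset.subset_insert _ _)) hτ'S
    · rw [← mul_assoc]; exact hτ'c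
    · rw [← mul_assoc]; rw [show σ * Equiv.swap a b = σ' from rfl] at *
      rw [hτ's, hsupp']

/-- if `σ ∈ S_d` is a product of exactly `r` disjoint nontrivial cycles whose
supports cover all of `{1,…,d}` (no fixed points), then there is a product `τ` of `r − 1`
disjoint transpositions such that `σ·τ` is a single `d`-cycle. -/
theorem stmt8 (d r : ℕ) (hr : 1 ≤ r) (σ : Equiv.Perm (Fin d))
    (hcycles : σ.cycleType.card = r)
    (hnofix : σ.support = Finset.univ) :
    ∃ τ : Equiv.Perm (Fin d),
      τ.cycleType = Multiset.replicate (r - 1) 2 ∧ (σ * τ).cycleType = {d} := by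
  have hcard : Multiset.card σ.cycleType = (r - 1) + 1 := by
    rw [hcycles]; omega
  have hinv : ∀ f ∈ σ.cycleFactorsFinset, 2 ≤ (f.support \ (∅ : Finset (Fin d))).card := by
    intro f hf
    rw [Finset.sdiff_empty]
    exact (Equiv.Perm.mem_cycleFactorsFinset_iff.1 hf).1.two_le_card_support
  obtain ⟨τ, hct, -, hc, hs⟩ := aux_main (r - 1) σ ∅ hcard hinv
  refine ⟨τ, hct, ?_⟩
  rw [hc.cycleType, hs, hnofix, Finset.card_univ, Fintype.card_fin]
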